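/- Let T be a t-arc-bounded tournament and let X = (X_1, ..., X_p) be a jewel-chain in T, i.e., disjoint vertex sets with all arcs between X_i and X_{i+1} going from X_i to X_{i+1}, and each T[X_i] strongly connected with χ⃗(T[X_i]) ≥ t+1. Then X contains no backward arc: every arc between X_i and X_j with i < j goes from X_i to X_j. -/

import Mathlib

variable {V : Type*}

/-- A tournament: an asymmetric, total relation. -/
def IsTournament (A : V → V → Prop) : Prop :=
  (∀ u v, A u v → ¬ A v u) ∧ (∀ u v, u ≠ v → A u v ∨ A v u)

/-- For an arc `e = uv`, `N(e) = N⁺(v) ∩ N⁻(u)`: vertices `w` with `v → w → u`. -/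
def ArcNbhd (A : V → V → Prop) (u v : V) : Set V := {w | A v w ∧ A w u}

/-- `S` induces an acyclic subdigraph. -/
def AcyclicOn (A : V → V → Prop) (S : Set V) : Prop :=
  ∀ v, ¬ Relation.TransGen (fun x y => x ∈ S ∧ y ∈ S ∧ A x y) v v

/-- The (di)chromatic number of the subdigraph induced on `S` is at most `k`:
`S` is covered by `k` sets, each inducing an acyclic subdigraph. -/
def ChromLE (A : V → V → Prop) (S : Set V) (k : ℕ) : Prop :=
  ∃ C : Fin k → Set V, (∀ v ∈ S, ∃ i, v ∈ C i) ∧ ∀ i, AcyclicOn A (C i ∩ S)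

/-- The (di)chromatic number of the subdigraph induced on `S` is at least `k`. -/
def ChromGE (A : V → V → Prop) (S : Set V) (k : ℕ) : Prop :=
  ∀ m, ChromLE A S m → k ≤ m

/-- Every arc neighborhood has chromatic number at most `t`. -/
def ArcBounded (A : V → V → Prop) (t : ℕ) : Prop :=
  ∀ u v, A u v → ChromLE A (ArcNbhd A u v) t

/-- `P 0, P 1, …, P k` is a directed walk/path. -/
def IsPathOn (A : V → V → Prop) (P : ℕ → V) (k : ℕ) : Prop :=
  ∀ i < k, A (P i) (P (i + 1))

/-- `P 0, …, P k` is a shortest directed path from `P 0` to `P k`. -/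
def IsShortestPath (A : V → V → Prop) (P : ℕ → V) (k : ℕ) : Prop :=
  IsPathOn A P k ∧
    ∀ (m : ℕ) (Q : ℕ → V), Q 0 = P 0 → Q m = P k → IsPathOn A Q m → k ≤ m

def StronglyConnected (A : V → V → Prop) : Prop :=
  ∀ u v : V, Relation.ReflTransGen A u v

def StronglyConnectedOn (A : V → V → Prop) (S : Set V) : Prop :=
  ∀ u ∈ S, ∀ v ∈ S, Relation.ReflTransGen (fun x y => x ∈ S ∧ y ∈ S ∧ A x y) u v

theorem stmt6 (A : V → V → Prop) (hT : IsTournament A) (t p : ℕ)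
    (hb : ArcBounded A t) (X : ℕ → Set V)
    (hdisj : ∀ i j, i < j → j < p → Disjoint (X i) (X j))
    (hchain : ∀ i, i + 1 < p → ∀ u ∈ X i, ∀ v ∈ X (i + 1), A u v)
    (hsc : ∀ i < p, StronglyConnectedOn A (X i))
    (hchrom : ∀ i < p, ChromGE A (X i) (t + 1)) :
    ∀ i j, i < j → j < p → ∀ u ∈ X i, ∀ v ∈ X j, A u v ∧ ¬ A v u := by
  have mono : ∀ (S S' : Set V) (k : ℕ), S ⊆ S' → ChromLE A S' k → ChromLE A S k := by
    rintro S S' k hss ⟨C, hcov, hac⟩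
    refine ⟨C, fun v hv => hcov v (hss hv), fun i v hv => hac i v ?_⟩
    exact Relation.TransGen.mono
      (fun x y h => ⟨⟨h.1.1, hss h.1.2⟩, ⟨h.2.1.1, hss h.2.1.2⟩, h.2.2⟩) v v hv
  have key : ∀ d i, 1 ≤ d → i + d < p → ∀ u ∈ X i, ∀ v ∈ X (i + d), A u v := by
    intro d
    induction d with
    | zero => omega
    | succ d ih =>
      intro i _ hip u hu v hv
      rcases Nat.eq_zero_or_pos d with hd0 | hd1
      · subst hd0; exact hchain i hip u hu v hv
      · by_contra hne
        have huv : u ≠ v := by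
          intro h
          exact Set.disjoint_left.mp (hdisj i (i + (d + 1)) (by omega) hip) hu (h ▸ hv)
        have hvu : A v u := ((hT.2 u v huv).resolve_left hne)
        have hsub : X (i + 1) ⊆ ArcNbhd A v u := by
          intro w hw
          refine ⟨hchain i (by omega) u hu w hw, ?_⟩
          have := ih (i + 1) hd1 (by omega) w hw v (by
            have : i + 1 + d = i + (d + 1) := by omega
            rwa [this])
          exact this
        have h1 := mono _ _ t hsub (hb v u hvu)
        have h2 := hchrom (i + 1) (by omega) t h1
        omega
  intro i j hij hjp u hu v hv
  have huv : A u v := key (j - i) i (by omega) (by omega) u hu v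
    (by rwa [show i + (j - i) = j by omega])
  exact ⟨huv, hT.1 u v huv⟩
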